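/- For all integers n and t with 0 < t < n and every real number p with 0 ≤ p ≤ 1, the single-exclusion number satisfies S(n,t) ≤ p·binom(n,t) + Σ_{i=1}^{t+1} binom(n,i)·(1−p)^{i·binom(n−i, t−i+1)}, where binom(a,b) denotes the binomial coefficient (equal to 0 when b < 0 or b > a). -/

import Mathlib

/-- An `(n,t)`-single-exclusion system: a collection of `t`-subsets (blocks) of an
`n`-set such that every subset `X` with `1 ≤ |X| ≤ t+1` has a block containing all
but exactly one element of `X`. -/
def IsSESystem (n t : ℕ) (S : Finset (Finset (Fin n))) : Prop :=
  (∀ B ∈ S, B.card = t) ∧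
  ∀ X : Finset (Fin n), 1 ≤ X.card → X.card ≤ t + 1 → ∃ B ∈ S, (X \ B).card = 1

/-- The `(n,t)`-single-exclusion number `S(n,t)`: the least number of blocks in an
`(n,t)`-single-exclusion system. -/
noncomputable def SENumber (n t : ℕ) : ℕ :=
  sInf {m : ℕ | ∃ S : Finset (Finset (Fin n)), IsSESystem n t S ∧ S.card = m}


open Finset


section helpers

variable {α : Type*} [DecidableEq α]

lemma bern_sum (A : Finset α) (p q : ℝ) :
    ∑ S ∈ A.powerset, p ^ S.card * q ^ (A.card - S.card) = (p + q) ^ A.card := by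
  have h := Finset.prod_add (fun _ : α => p) (fun _ : α => q) A
  rw [Finset.prod_const] at h
  rw [h]
  refine Finset.sum_congr rfl fun S hS => ?_
  rw [Finset.prod_const, Finset.prod_const, Finset.card_sdiff_of_subset (Finset.mem_powerset.mp hS)]

lemma avoid_sum (A D : Finset α) (hD : D ⊆ A) (p q : ℝ) (hpq : p + q = 1) :
    ∑ S ∈ (A \ D).powerset, p ^ S.card * q ^ (A.card - S.card) = q ^ D.card := by
  have hcard : (A \ D).card = A.card - D.card := Finset.card_sdiff_of_subset hD
  have hDA : D.card ≤ A.card := Finset.card_le_card hD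
  have key : ∀ S ∈ (A \ D).powerset,
      p ^ S.card * q ^ (A.card - S.card)
        = q ^ D.card * (p ^ S.card * q ^ ((A \ D).card - S.card)) := by
    intro S hS
    have h1 : S.card ≤ (A \ D).card := Finset.card_le_card (Finset.mem_powerset.mp hS)
    have h2 : A.card - S.card = D.card + ((A \ D).card - S.card) := by omega
    rw [h2, pow_add]; ring
  rw [Finset.sum_congr rfl key, ← Finset.mul_sum, bern_sum, hpq, one_pow, mul_one]

lemma total_sum (A : Finset α) (p q : ℝ) (hpq : p + q = 1) :
    ∑ S ∈ A.powerset, p ^ S.card * q ^ (A.card - S.card) = 1 := by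
  rw [bern_sum, hpq, one_pow]

lemma marg_sum (A : Finset α) (B : α) (hB : B ∈ A) (p q : ℝ) (hpq : p + q = 1) :
    ∑ S ∈ A.powerset.filter (fun S => B ∈ S), p ^ S.card * q ^ (A.card - S.card) = p := by
  have hsplit := Finset.sum_filter_add_sum_filter_not A.powerset (fun S => B ∈ S)
    (fun S => p ^ S.card * q ^ (A.card - S.card))
  have hne : A.powerset.filter (fun S => ¬ B ∈ S) = (A \ {B}).powerset := by
    ext S
    simp only [Finset.mem_filter, Finset.mem_powerset, Finset.subset_sdiff,
      Finset.disjoint_singleton_right]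
  have havoid : ∑ S ∈ A.powerset.filter (fun S => ¬ B ∈ S),
      p ^ S.card * q ^ (A.card - S.card) = q := by
    rw [hne, avoid_sum A {B} (Finset.singleton_subset_iff.mpr hB) p q hpq,
      Finset.card_singleton, pow_one]
  have htot := total_sum A p q hpq
  linarith [hsplit, havoid, htot]
end helpers

section comb

lemma sdiff_helper {α : Type*} [DecidableEq α] {X C : Finset α} {x : α}
    (hx : x ∈ X) (hC : Disjoint C X) : X \ (X.erase x ∪ C) = {x} := by
  ext y
  simp only [Finset.mem_sdiff, Finset.mem_union, Finset.mem_erase, Finset.mem_singleton]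
  constructor
  · rintro ⟨hyX, hy⟩
    push_neg at hy
    exact by_contra fun hne => (hy.1 hne hyX).elim
  · rintro rfl
    refine ⟨hx, ?_⟩
    push_neg
    exact ⟨fun h _ => (h rfl).elim, Finset.disjoint_right.mp hC hx⟩

lemma exists_block (n t : ℕ) (htn : t < n) (X : Finset (Fin n))
    (h1 : 1 ≤ X.card) (h2 : X.card ≤ t + 1) :
    ∃ B : Finset (Fin n), B.card = t ∧ (X \ B).card = 1 := by
  obtain ⟨x, hx⟩ := Finset.card_pos.mp h1
  have hsub : X.erase x ⊆ Finset.univ.erase x :=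
    Finset.erase_subset_erase _ (Finset.subset_univ X)
  have hc1 : (X.erase x).card ≤ t := by
    rw [Finset.card_erase_of_mem hx]; omega
  have hc2 : t ≤ (Finset.univ.erase x).card := by
    rw [Finset.card_erase_of_mem (Finset.mem_univ x), Finset.card_univ, Fintype.card_fin]
    omega
  obtain ⟨B, hXB, hBu, hB⟩ := Finset.exists_subsuperset_card_eq hsub hc1 hc2
  refine ⟨B, hB, ?_⟩
  have hxB : x ∉ B := fun h => (Finset.mem_erase.mp (hBu h)).1 rfl
  have : X \ B = {x} := by
    ext y
    simp only [Finset.mem_sdiff, Finset.mem_singleton]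
    constructor
    · rintro ⟨hyX, hyB⟩
      by_contra hne
      exact hyB (hXB (Finset.mem_erase.mpr ⟨hne, hyX⟩))
    · rintro rfl; exact ⟨hx, hxB⟩
  rw [this, Finset.card_singleton]

lemma count_lb (n t : ℕ) (X : Finset (Fin n)) (h1 : 1 ≤ X.card) (h2 : X.card ≤ t + 1) :
    X.card * ((n - X.card).choose (t + 1 - X.card)) ≤
      ((Finset.powersetCard t (Finset.univ : Finset (Fin n))).filter
        (fun B => (X \ B).card = 1)).card := by
  set i := X.card with hi
  set P := (Finset.univ \ X).powersetCard (t + 1 - i) with hP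
  have hdisjX : ∀ C ∈ P, Disjoint C X := by
    intro C hC
    have := (Finset.mem_powersetCard.mp hC).1
    exact Finset.disjoint_right.mpr fun {a} haX haC =>
      (Finset.mem_sdiff.mp (this haC)).2 haX
  set W := X.biUnion (fun x => P.image (fun C => X.erase x ∪ C)) with hW
  have himg : ∀ x ∈ X, ∀ B ∈ P.image (fun C => X.erase x ∪ C), X \ B = {x} := by
    intro x hx B hB
    obtain ⟨C, hC, rfl⟩ := Finset.mem_image.mp hB
    exact sdiff_helper hx (hdisjX C hC)
  have hWsub : W ⊆ (Finset.powersetCard t (Finset.univ : Finset (Fin n))).filter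
      (fun B => (X \ B).card = 1) := by
    intro B hB
    obtain ⟨x, hx, hBx⟩ := Finset.mem_biUnion.mp hB
    obtain ⟨C, hC, rfl⟩ := Finset.mem_image.mp hBx
    obtain ⟨hCsub, hCcard⟩ := Finset.mem_powersetCard.mp hC
    have hdisj : Disjoint (X.erase x) C :=
      Finset.disjoint_of_subset_left (Finset.erase_subset x X)
        (hdisjX C hC).symm
    rw [Finset.mem_filter, Finset.mem_powersetCard_univ]
    constructor
    · rw [Finset.card_union_of_disjoint hdisj, Finset.card_erase_of_mem hx, hCcard]
      omega
    · rw [himg x hx _ hBx, Finset.card_singleton]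
  have hPcard : P.card = (n - i).choose (t + 1 - i) := by
    rw [hP, Finset.card_powersetCard, Finset.card_sdiff_of_subset (Finset.subset_univ X),
      Finset.card_univ, Fintype.card_fin]
  have hdis : ∀ x ∈ X, ∀ y ∈ X, x ≠ y →
      Disjoint (P.image (fun C => X.erase x ∪ C)) (P.image (fun C => X.erase y ∪ C)) := by
    intro x hx y hy hxy
    rw [Finset.disjoint_left]
    intro B hBx hBy
    have e1 := himg x hx B hBx
    have e2 := himg y hy B hBy
    rw [e1] at e2
    exact hxy (Finset.singleton_injective e2)
  have himgcard : ∀ x ∈ X, (P.image (fun C => X.erase x ∪ C)).card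
      = (n - i).choose (t + 1 - i) := by
    intro x hx
    rw [Finset.card_image_of_injOn, hPcard]
    intro C hC C' hC' hEq
    have key : ∀ D ∈ P, (X.erase x ∪ D) \ X = D := by
      intro D hD
      rw [Finset.union_sdiff_distrib,
        Finset.sdiff_eq_empty_iff_subset.mpr (Finset.erase_subset x X),
        (Finset.sdiff_eq_self_iff_disjoint).mpr (hdisjX D hD), Finset.empty_union]
    have hEq' : X.erase x ∪ C = X.erase x ∪ C' := hEq
    rw [← key C (Finset.mem_coe.mp hC), ← key C' (Finset.mem_coe.mp hC'), hEq']
  have hWcard : W.card = i * (n - i).choose (t + 1 - i) := by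
    rw [hW, Finset.card_biUnion hdis, Finset.sum_congr rfl himgcard,
      Finset.sum_const, smul_eq_mul]
  calc X.card * ((n - X.card).choose (t + 1 - X.card)) = W.card := hWcard.symm
    _ ≤ _ := Finset.card_le_card hWsub

end comb


set_option linter.unusedVariables false in
theorem stmt0 (n t : ℕ) (ht : 0 < t) (htn : t < n) (p : ℝ) (hp0 : 0 ≤ p) (hp1 : p ≤ 1) :
    (SENumber n t : ℝ) ≤ p * (n.choose t : ℝ) +
      ∑ i ∈ Finset.Icc 1 (t + 1),
        (n.choose i : ℝ) * (1 - p) ^ (i * ((n - i).choose (t + 1 - i))) := by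
  set q : ℝ := 1 - p with hq
  have hpq : p + q = 1 := by rw [hq]; ring
  have hq0 : 0 ≤ q := by rw [hq]; linarith
  have hq1 : q ≤ 1 := by rw [hq]; linarith
  set A : Finset (Finset (Fin n)) := Finset.powersetCard t Finset.univ with hA
  set w : Finset (Finset (Fin n)) → ℝ := fun S => p ^ S.card * q ^ (A.card - S.card) with hw
  have hAcard : A.card = n.choose t := by
    rw [hA, Finset.card_powersetCard, Finset.card_univ, Fintype.card_fin]
  set V : Finset (Finset (Fin n)) :=
    Finset.univ.filter (fun X => 1 ≤ X.card ∧ X.card ≤ t + 1) with hV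
  set bad : Finset (Finset (Fin n)) → Finset (Finset (Fin n)) :=
    fun S => V.filter (fun X => ∀ B ∈ S, (X \ B).card ≠ 1) with hbad
  set R : ℝ := p * (n.choose t : ℝ) + ∑ i ∈ Finset.Icc 1 (t + 1),
    (n.choose i : ℝ) * q ^ (i * ((n - i).choose (t + 1 - i))) with hR
  show (SENumber n t : ℝ) ≤ R
  have hw_nonneg : ∀ S, 0 ≤ w S := fun S =>
    mul_nonneg (pow_nonneg hp0 _) (pow_nonneg hq0 _)
  have htot : ∑ S ∈ A.powerset, w S = 1 := total_sum A p q hpq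
  -- first moment
  have hmom : ∑ S ∈ A.powerset, w S * (S.card : ℝ) = p * (n.choose t : ℝ) := by
    have hcardeq : ∀ S ∈ A.powerset, w S * (S.card : ℝ)
        = ∑ B ∈ A, if B ∈ S then w S else 0 := by
      intro S hS
      rw [Finset.sum_ite_mem, Finset.inter_eq_right.mpr (Finset.mem_powerset.mp hS),
        Finset.sum_const, nsmul_eq_mul, mul_comm]
    rw [Finset.sum_congr rfl hcardeq, Finset.sum_comm]
    have hinner : ∀ B ∈ A, (∑ S ∈ A.powerset, if B ∈ S then w S else 0) = p := by
      intro B hB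
      rw [← Finset.sum_filter]
      exact marg_sum A B hB p q hpq
    rw [Finset.sum_congr rfl hinner, Finset.sum_const, nsmul_eq_mul, hAcard, mul_comm]
  -- second moment
  have hbadcard : ∀ S, ((bad S).card : ℝ)
      = ∑ X ∈ V, if (∀ B ∈ S, (X \ B).card ≠ 1) then (1 : ℝ) else 0 := by
    intro S
    rw [hbad]
    rw [Finset.card_filter, Nat.cast_sum]
    exact Finset.sum_congr rfl fun X _ => by split <;> simp
  have hmom2 : ∑ S ∈ A.powerset, w S * ((bad S).card : ℝ)
      ≤ ∑ i ∈ Finset.Icc 1 (t + 1),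
          (n.choose i : ℝ) * q ^ (i * ((n - i).choose (t + 1 - i))) := by
    have hswap : ∑ S ∈ A.powerset, w S * ((bad S).card : ℝ)
        = ∑ X ∈ V, ∑ S ∈ A.powerset,
            (if ∀ B ∈ S, (X \ B).card ≠ 1 then w S else 0) := by
      rw [← Finset.sum_comm]
      refine Finset.sum_congr rfl fun S hS => ?_
      rw [hbadcard S, Finset.mul_sum]
      exact Finset.sum_congr rfl fun X _ => by split <;> simp
    have hinner : ∀ X ∈ V, (∑ S ∈ A.powerset,
        if ∀ B ∈ S, (X \ B).card ≠ 1 then w S else 0)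
        = q ^ (A.filter (fun B => (X \ B).card = 1)).card := by
      intro X _
      rw [← Finset.sum_filter]
      have hfe : A.powerset.filter (fun S => ∀ B ∈ S, (X \ B).card ≠ 1)
          = (A \ A.filter (fun B => (X \ B).card = 1)).powerset := by
        ext S
        simp only [Finset.mem_filter, Finset.mem_powerset]
        constructor
        · rintro ⟨hSA, hall⟩ b hb
          exact Finset.mem_sdiff.mpr ⟨hSA hb,
            fun hf => hall b hb (Finset.mem_filter.mp hf).2⟩
        · intro hsub
          refine ⟨fun b hb => (Finset.mem_sdiff.mp (hsub hb)).1, fun b hb h1 =>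
            (Finset.mem_sdiff.mp (hsub hb)).2 (Finset.mem_filter.mpr
              ⟨(Finset.mem_sdiff.mp (hsub hb)).1, h1⟩)⟩
      rw [hfe, avoid_sum A _ (Finset.filter_subset _ _) p q hpq]
    have hXbound : ∀ X ∈ V, q ^ (A.filter (fun B => (X \ B).card = 1)).card
        ≤ q ^ (X.card * ((n - X.card).choose (t + 1 - X.card))) := by
      intro X hX
      have hXV := Finset.mem_filter.mp hX
      exact pow_le_pow_of_le_one hq0 hq1 (count_lb n t X hXV.2.1 hXV.2.2)
    have hmaps : ∀ X ∈ V, X.card ∈ Finset.Icc 1 (t + 1) := fun X hX =>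
      Finset.mem_Icc.mpr (Finset.mem_filter.mp hX).2
    have hfib := Finset.sum_fiberwise_of_maps_to hmaps
      (fun X => q ^ (X.card * ((n - X.card).choose (t + 1 - X.card))))
    have hfiber_eq : ∀ i ∈ Finset.Icc 1 (t + 1),
        (∑ X ∈ V.filter (fun X => X.card = i),
          q ^ (X.card * ((n - X.card).choose (t + 1 - X.card))))
        = (n.choose i : ℝ) * q ^ (i * ((n - i).choose (t + 1 - i))) := by
      intro i hi
      obtain ⟨hi1, hi2⟩ := Finset.mem_Icc.mp hi
      have hfc : V.filter (fun X => X.card = i)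
          = Finset.powersetCard i (Finset.univ : Finset (Fin n)) := by
        ext X
        simp only [hV, Finset.mem_filter, Finset.mem_univ, true_and,
          Finset.mem_powersetCard_univ]
        constructor
        · rintro ⟨-, h⟩; exact h
        · rintro h; exact ⟨⟨by omega, by omega⟩, h⟩
      rw [Finset.sum_congr hfc (fun X hX => by
        rw [Finset.mem_powersetCard_univ.mp hX]), Finset.sum_const, nsmul_eq_mul,
        Finset.card_powersetCard, Finset.card_univ, Fintype.card_fin]
    calc ∑ S ∈ A.powerset, w S * ((bad S).card : ℝ)
        = ∑ X ∈ V, ∑ S ∈ A.powerset,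
            (if ∀ B ∈ S, (X \ B).card ≠ 1 then w S else 0) := hswap
      _ = ∑ X ∈ V, q ^ (A.filter (fun B => (X \ B).card = 1)).card :=
          Finset.sum_congr rfl hinner
      _ ≤ ∑ X ∈ V, q ^ (X.card * ((n - X.card).choose (t + 1 - X.card))) :=
          Finset.sum_le_sum hXbound
      _ = ∑ i ∈ Finset.Icc 1 (t + 1), ∑ X ∈ V.filter (fun X => X.card = i),
            q ^ (X.card * ((n - X.card).choose (t + 1 - X.card))) := hfib.symm
      _ = _ := Finset.sum_congr rfl hfiber_eq
  -- expectation bound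
  have hexp : ∑ S ∈ A.powerset, w S * ((S.card : ℝ) + ((bad S).card : ℝ)) ≤ R := by
    have hsplit : ∑ S ∈ A.powerset, w S * ((S.card : ℝ) + ((bad S).card : ℝ))
        = (∑ S ∈ A.powerset, w S * (S.card : ℝ))
          + ∑ S ∈ A.powerset, w S * ((bad S).card : ℝ) := by
      rw [← Finset.sum_add_distrib]
      exact Finset.sum_congr rfl fun S _ => by ring
    rw [hsplit, hmom, hR]
    linarith [hmom2]
  -- existence of a good outcome
  have hexists : ∃ S ∈ A.powerset, ((S.card : ℝ) + ((bad S).card : ℝ)) ≤ R := by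
    by_contra hcon
    push_neg at hcon
    have hne : ∑ S ∈ A.powerset, w S ≠ 0 := by rw [htot]; exact one_ne_zero
    obtain ⟨S0, hS0, hS0ne⟩ := Finset.exists_ne_zero_of_sum_ne_zero hne
    have hpos : 0 < ∑ S ∈ A.powerset,
        w S * (((S.card : ℝ) + ((bad S).card : ℝ)) - R) := by
      refine Finset.sum_pos' (fun S hS => mul_nonneg (hw_nonneg S)
        (by linarith [hcon S hS])) ⟨S0, hS0, ?_⟩
      exact mul_pos (lt_of_le_of_ne (hw_nonneg S0) (Ne.symm hS0ne))
        (by linarith [hcon S0 hS0])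
    have heq : ∑ S ∈ A.powerset, w S * (((S.card : ℝ) + ((bad S).card : ℝ)) - R)
        = (∑ S ∈ A.powerset, w S * ((S.card : ℝ) + ((bad S).card : ℝ)))
          - (∑ S ∈ A.powerset, w S) * R := by
      rw [Finset.sum_mul, ← Finset.sum_sub_distrib]
      exact Finset.sum_congr rfl fun S _ => by ring
    rw [heq, htot, one_mul] at hpos
    linarith [hexp]
  obtain ⟨S, hS, hSle⟩ := hexists
  -- build the SE system
  have hfixex : ∀ X ∈ bad S, ∃ B : Finset (Fin n), B.card = t ∧ (X \ B).card = 1 := by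
    intro X hX
    have hXV := Finset.mem_filter.mp (Finset.mem_filter.mp hX).1
    exact exists_block n t htn X hXV.2.1 hXV.2.2
  choose! fix hfix1 hfix2 using hfixex
  set T : Finset (Finset (Fin n)) := S ∪ (bad S).image fix with hT
  have hTsys : IsSESystem n t T := by
    constructor
    · intro B hB
      rcases Finset.mem_union.mp hB with hB | hB
      · exact Finset.mem_powersetCard_univ.mp (Finset.mem_powerset.mp hS hB)
      · obtain ⟨X, hX, rfl⟩ := Finset.mem_image.mp hB
        exact hfix1 X hX
    · intro X h1 h2
      by_cases hc : ∃ B ∈ S, (X \ B).card = 1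
      · obtain ⟨B, hB, hB1⟩ := hc
        exact ⟨B, Finset.mem_union_left _ hB, hB1⟩
      · push_neg at hc
        have hXbad : X ∈ bad S := Finset.mem_filter.mpr
          ⟨Finset.mem_filter.mpr ⟨Finset.mem_univ X, h1, h2⟩, hc⟩
        exact ⟨fix X, Finset.mem_union_right _ (Finset.mem_image_of_mem fix hXbad),
          hfix2 X hXbad⟩
  have hSE : SENumber n t ≤ T.card := Nat.sInf_le ⟨T, hTsys, rfl⟩
  have hTcard : T.card ≤ S.card + (bad S).card :=
    le_trans (Finset.card_union_le _ _)
      (add_le_add_right Finset.card_image_le _)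
  calc (SENumber n t : ℝ) ≤ (T.card : ℝ) := Nat.cast_le.mpr hSE
    _ ≤ (S.card : ℝ) + ((bad S).card : ℝ) := by exact_mod_cast hTcard
    _ ≤ R := hSle
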